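/- Suppose the experiment Π' = (S', π') is α-conditionally more informative than the experiment Π = (S, π), witnessed by an experiment Π'' on S' × {0,1} and a function κ: S' → [0,1] with π''(s',1|θ) = π'(s'|θ)κ(s') and ∑_{s'} π''(s',1|θ) = α for all θ, such that Π is a garbling of the conditional experiment (S', π''(·|1,·)). Then the function γ(s') = κ(s')/α is a weight in Γ(Π') and Π is a weighted garbling of Π' with weight γ, whose size is (1/α)·max_{s'∈S'} κ(s'); in particular, if κ(s') = 1 for some s', the size is 1/α. -/
import Mathlib


/-- If Π' is α-conditionally more informative than Π, witnessed by an
experiment Π'' on S' × Bool and κ : S' → [0,1] with π''(s',1|θ) = π'(s'|θ)κ(s') and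
∑_{s'} π''(s',1|θ) = α, and Π is a garbling of the conditional experiment
π''(·|1,·) = π''(·,1|·)/α, then γ(s') = κ(s')/α is a weight in Γ(Π') and Π is a
weighted garbling of Π' with weight γ of size (1/α)·max κ; in particular, if
κ(s') = 1 for some s', the size is 1/α. -/
theorem conditionally_more_informative_implies_weighted_garbling
    {Θ S S' : Type*} [Fintype Θ] [Nonempty Θ]
    [Fintype S] [Nonempty S] [Fintype S'] [Nonempty S']
    (π : S → Θ → ℝ) (π' : S' → Θ → ℝ)
    (hπ0 : ∀ s θ, 0 ≤ π s θ) (hπ1 : ∀ θ, ∑ s, π s θ = 1)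
    (hπ'0 : ∀ s' θ, 0 ≤ π' s' θ) (hπ'1 : ∀ θ, ∑ s', π' s' θ = 1)
    (α : ℝ) (hα0 : 0 < α) (hα1 : α ≤ 1)
    (π'' : S' × Bool → Θ → ℝ)
    (hπ''0 : ∀ p θ, 0 ≤ π'' p θ) (hπ''1 : ∀ θ, ∑ p : S' × Bool, π'' p θ = 1)
    -- (i) the marginal of Π'' on S' is π'
    (hmarg : ∀ s' θ, π'' (s', false) θ + π'' (s', true) θ = π' s' θ)
    -- (ii) ∑_{s'} π''(s',1|θ) = α for every θ
    (hsum : ∀ θ, ∑ s', π'' (s', true) θ = α)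
    -- (iii) κ : S' → [0,1] with π''(s',1|θ) = π'(s'|θ)κ(s')
    (κ : S' → ℝ) (hκ0 : ∀ s', 0 ≤ κ s') (hκ1 : ∀ s', κ s' ≤ 1)
    (hκ : ∀ s' θ, π'' (s', true) θ = π' s' θ * κ s')
    -- (iv) Π is a garbling of the conditional experiment (S', π''(·|1,·))
    (ψ : S' → S → ℝ) (hψ0 : ∀ s' s, 0 ≤ ψ s' s) (hψ1 : ∀ s', ∑ s, ψ s' s = 1)
    (hgarb : ∀ s θ, π s θ = ∑ s', ψ s' s * (π'' (s', true) θ / α)) :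
    -- γ = κ/α is a weight in Γ(Π')
    (∀ s', 0 ≤ κ s' / α) ∧
    (∀ θ, ∑ s', (κ s' / α) * π' s' θ = 1) ∧
    -- Π is a weighted garbling of Π' with weight γ
    (∃ φ : S' → S → ℝ, (∀ s' s, 0 ≤ φ s' s) ∧ (∀ s', ∑ s, φ s' s = 1) ∧
      ∀ s θ, π s θ = ∑ s', φ s' s * (κ s' / α) * π' s' θ) ∧
    -- the size of this weighted garbling is (1/α)·max_{s'} κ(s')
    (∀ κmax : ℝ, IsGreatest (Set.range κ) κmax →
      IsGreatest (Set.range fun s' => κ s' / α) ((1 / α) * κmax)) ∧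
    -- in particular, if κ(s') = 1 for some s', the size is 1/α
    ((∃ s', κ s' = 1) →
      IsGreatest (Set.range fun s' => κ s' / α) (1 / α)) := by
  have hαne : α ≠ 0 := ne_of_gt hα0
  refine ⟨fun s' => div_nonneg (hκ0 s') hα0.le, ?_, ?_, ?_, ?_⟩
  · intro θ
    have : ∑ s', (κ s' / α) * π' s' θ = (∑ s', π'' (s', true) θ) / α := by
      rw [Finset.sum_div]
      apply Finset.sum_congr rfl
      intro s' _
      rw [hκ]; ring
    rw [this, hsum, div_self hαne]
  · refine ⟨ψ, hψ0, hψ1, fun s θ => ?_⟩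
    rw [hgarb s θ]
    apply Finset.sum_congr rfl
    intro s' _
    rw [hκ]; ring
  · rintro κmax ⟨⟨s₀, hs₀⟩, hub⟩
    constructor
    · exact ⟨s₀, by show κ s₀ / α = 1 / α * κmax; rw [hs₀]; ring⟩
    · rintro x ⟨s', rfl⟩
      have h := hub ⟨s', rfl⟩
      show κ s' / α ≤ 1 / α * κmax
      calc κ s' / α ≤ κmax / α := by gcongr
        _ = 1 / α * κmax := by ring
  · rintro ⟨s₁, hs₁⟩
    constructor
    · exact ⟨s₁, by show κ s₁ / α = 1 / α; rw [hs₁]⟩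
    · rintro x ⟨s', rfl⟩
      show κ s' / α ≤ 1 / α
      gcongr
      exact hκ1 s'
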